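/- Under the hypotheses of the two previous descent bounds (approximate gradient accuracy ε₄ ≤ min(ε₁/(2√2), ε₂²/(24L₂)) and approximate Hessian accuracy ε₃ ≤ ε₂/24), the NCG-S update x⁺ (which chooses between the curvature step x - (ε₂/L₂)sign(vᵀg)v and the gradient step x - g/L₁ according to whichever predicted decrease is larger) satisfies f(x) - f(x⁺) ≥ max( (1/(4L₁))‖g‖² - ε₁²/(8L₁), -(ε₂²/(2L₂²))·vᵀHv - 11ε₂³/(48L₂²) ). -/

import Mathlib

open scoped RealInnerProductSpace

noncomputable def sgn (t : ℝ) : ℝ := if 0 ≤ t then 1 else -1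

open scoped RealInnerProductSpace
open Set

lemma grad_inner {n : ℕ} (f : EuclideanSpace ℝ (Fin n) → ℝ) (y w : EuclideanSpace ℝ (Fin n)) :
    fderiv ℝ f y w = ⟪gradient f y, w⟫ := by
  rw [gradient, InnerProductSpace.toDual_symm_apply]

lemma fderiv_sub_norm {n : ℕ} (f : EuclideanSpace ℝ (Fin n) → ℝ) (a b : EuclideanSpace ℝ (Fin n)) :
    ‖fderiv ℝ f a - fderiv ℝ f b‖ = ‖gradient f a - gradient f b‖ := by
  have ha : fderiv ℝ f a = InnerProductSpace.toDual ℝ _ (gradient f a) := by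
    rw [gradient, LinearIsometryEquiv.apply_symm_apply]
  have hb : fderiv ℝ f b = InnerProductSpace.toDual ℝ _ (gradient f b) := by
    rw [gradient, LinearIsometryEquiv.apply_symm_apply]
  rw [ha, hb, ← map_sub, LinearIsometryEquiv.norm_map]

lemma taylor1 {E F : Type*} [NormedAddCommGroup E] [NormedSpace ℝ E]
    [NormedAddCommGroup F] [NormedSpace ℝ F]
    {φ : E → F} (hφ : Differentiable ℝ φ) {L : ℝ}
    (hlip : ∀ a b, ‖fderiv ℝ φ a - fderiv ℝ φ b‖ ≤ L * ‖a - b‖)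
    (x dd : E) : ‖φ (x + dd) - φ x - fderiv ℝ φ x dd‖ ≤ L / 2 * ‖dd‖ ^ 2 := by
  set G : ℝ → F := fun t => φ (x + t • dd) - t • fderiv ℝ φ x dd - φ x with hG
  have hd : ∀ t : ℝ, HasDerivAt G (fderiv ℝ φ (x + t • dd) dd - fderiv ℝ φ x dd) t := by
    intro t
    have hc : HasDerivAt (fun t : ℝ => x + t • dd) dd t := by
      simpa using ((hasDerivAt_id t).smul_const dd).const_add x
    have h1 : HasDerivAt (fun t : ℝ => φ (x + t • dd)) (fderiv ℝ φ (x + t • dd) dd) t :=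
      (hφ (x + t • dd)).hasFDerivAt.comp_hasDerivAt t hc
    have h2 : HasDerivAt (fun t : ℝ => t • fderiv ℝ φ x dd) (fderiv ℝ φ x dd) t := by
      simpa using (hasDerivAt_id t).smul_const (fderiv ℝ φ x dd)
    simpa [hG] using (h1.sub h2).sub_const (φ x)
  have hB : ∀ t : ℝ, HasDerivAt (fun t : ℝ => L * ‖dd‖ ^ 2 * (t ^ 2 / 2)) (L * ‖dd‖ ^ 2 * t) t := by
    intro t
    have h := ((hasDerivAt_pow 2 t).div_const 2).const_mul (L * ‖dd‖ ^ 2)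
    refine h.congr_deriv ?_
    ring
  have key : ∀ u ∈ Icc (0:ℝ) 1, ‖G u‖ ≤ L * ‖dd‖ ^ 2 * (u ^ 2 / 2) := by
    apply image_norm_le_of_norm_deriv_right_le_deriv_boundary
      (fun t _ => (hd t).continuousAt.continuousWithinAt)
      (fun t _ => (hd t).hasDerivWithinAt)
      (by simp [hG]) hB
    intro t ht
    have h0 : ‖fderiv ℝ φ (x + t • dd) dd - fderiv ℝ φ x dd‖
        ≤ ‖fderiv ℝ φ (x + t • dd) - fderiv ℝ φ x‖ * ‖dd‖ := by
      simpa using (fderiv ℝ φ (x + t • dd) - fderiv ℝ φ x).le_opNorm dd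
    have h1 : ‖fderiv ℝ φ (x + t • dd) - fderiv ℝ φ x‖ ≤ L * (t * ‖dd‖) := by
      have := hlip (x + t • dd) x
      simpa [norm_smul, abs_of_nonneg ht.1] using this
    calc ‖fderiv ℝ φ (x + t • dd) dd - fderiv ℝ φ x dd‖
        ≤ L * (t * ‖dd‖) * ‖dd‖ := h0.trans (by
          apply mul_le_mul_of_nonneg_right h1 (norm_nonneg _))
      _ = L * ‖dd‖ ^ 2 * t := by ring
  have := key 1 (right_mem_Icc.2 zero_le_one)
  have hG1 : G 1 = φ (x + dd) - φ x - fderiv ℝ φ x dd := by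
    simp [hG]; abel
  rw [hG1] at this
  calc ‖φ (x + dd) - φ x - fderiv ℝ φ x dd‖ ≤ L * ‖dd‖ ^ 2 * (1 ^ 2 / 2) := this
    _ = L / 2 * ‖dd‖ ^ 2 := by ring
open Set

lemma taylor2 {n : ℕ} {f : EuclideanSpace ℝ (Fin n) → ℝ}
    (hf : Differentiable ℝ f) (hf' : Differentiable ℝ (gradient f)) {L : ℝ}
    (hHlip : ∀ a b, ‖fderiv ℝ (gradient f) a - fderiv ℝ (gradient f) b‖ ≤ L * ‖a - b‖)
    (x δ : EuclideanSpace ℝ (Fin n)) :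
    |f (x + δ) - f x - ⟪gradient f x, δ⟫ - ⟪fderiv ℝ (gradient f) x δ, δ⟫ / 2|
      ≤ L / 6 * ‖δ‖ ^ 3 := by
  set A := fderiv ℝ (gradient f) x with hA
  set G : ℝ → ℝ := fun t =>
    f (x + t • δ) - f x - t * ⟪gradient f x, δ⟫ - t ^ 2 / 2 * ⟪A δ, δ⟫ with hG
  have hd : ∀ t : ℝ, HasDerivAt G
      (⟪gradient f (x + t • δ), δ⟫ - ⟪gradient f x, δ⟫ - t * ⟪A δ, δ⟫) t := by
    intro t
    have hc : HasDerivAt (fun t : ℝ => x + t • δ) δ t := by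
      simpa using ((hasDerivAt_id t).smul_const δ).const_add x
    have h1 : HasDerivAt (fun t : ℝ => f (x + t • δ)) (fderiv ℝ f (x + t • δ) δ) t :=
      (hf (x + t • δ)).hasFDerivAt.comp_hasDerivAt t hc
    rw [grad_inner] at h1
    have h2 : HasDerivAt (fun t : ℝ => t * ⟪gradient f x, δ⟫) ⟪gradient f x, δ⟫ t := by
      simpa using (hasDerivAt_id t).mul_const (⟪gradient f x, δ⟫)
    have h3 : HasDerivAt (fun t : ℝ => t ^ 2 / 2 * ⟪A δ, δ⟫) (t * ⟪A δ, δ⟫) t := by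
      have h := ((hasDerivAt_pow 2 t).div_const 2).mul_const (⟪A δ, δ⟫)
      refine h.congr_deriv ?_
      ring
    exact ((h1.sub_const (f x)).sub h2).sub h3
  have hB : ∀ t : ℝ, HasDerivAt (fun t : ℝ => L * ‖δ‖ ^ 3 * (t ^ 3 / 6)) (L * ‖δ‖ ^ 3 * (t ^ 2 / 2)) t := by
    intro t
    have h := ((hasDerivAt_pow 3 t).div_const 6).const_mul (L * ‖δ‖ ^ 3)
    refine h.congr_deriv ?_
    ring
  have key : ∀ u ∈ Icc (0:ℝ) 1, ‖G u‖ ≤ L * ‖δ‖ ^ 3 * (u ^ 3 / 6) := by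
    apply image_norm_le_of_norm_deriv_right_le_deriv_boundary
      (fun t _ => (hd t).continuousAt.continuousWithinAt)
      (fun t _ => (hd t).hasDerivWithinAt)
      (by simp [hG]) hB
    intro t ht
    have htay := taylor1 hf' hHlip x (t • δ)
    have hsm : fderiv ℝ (gradient f) x (t • δ) = t • A δ := by rw [← hA, map_smul]
    rw [hsm] at htay
    have hip : ⟪gradient f (x + t • δ), δ⟫ - ⟪gradient f x, δ⟫ - t * ⟪A δ, δ⟫
        = ⟪gradient f (x + t • δ) - gradient f x - t • A δ, δ⟫ := by
      rw [inner_sub_left, inner_sub_left, real_inner_smul_left]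
    rw [Real.norm_eq_abs, hip]
    calc |⟪gradient f (x + t • δ) - gradient f x - t • A δ, δ⟫|
        ≤ ‖gradient f (x + t • δ) - gradient f x - t • A δ‖ * ‖δ‖ :=
          abs_real_inner_le_norm _ _
      _ ≤ L / 2 * ‖t • δ‖ ^ 2 * ‖δ‖ := by
          apply mul_le_mul_of_nonneg_right htay (norm_nonneg _)
      _ ≤ L * ‖δ‖ ^ 3 * (t ^ 2 / 2) := by
          rw [norm_smul, Real.norm_eq_abs, abs_of_nonneg ht.1]
          ring_nf
          nlinarith [norm_nonneg δ, sq_nonneg t]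
  have h1 := key 1 (right_mem_Icc.2 zero_le_one)
  have hG1 : G 1 = f (x + δ) - f x - ⟪gradient f x, δ⟫ - ⟪A δ, δ⟫ / 2 := by
    simp [hG]; ring_nf
  rw [hG1, Real.norm_eq_abs] at h1
  calc |f (x + δ) - f x - ⟪gradient f x, δ⟫ - ⟪A δ, δ⟫ / 2|
      ≤ L * ‖δ‖ ^ 3 * (1 ^ 3 / 6) := h1
    _ = L / 6 * ‖δ‖ ^ 3 := by ring

lemma sgn_mul_self (t : ℝ) : sgn t * t = |t| := by
  unfold sgn; split_ifs with h
  · simp [abs_of_nonneg h]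
  · rw [abs_of_neg (lt_of_not_ge h)]; ring

lemma sgn_abs (t : ℝ) : |sgn t| = 1 := by
  unfold sgn; split_ifs <;> simp

set_option maxHeartbeats 1000000 in
theorem stmt_5 {d : ℕ} (L₁ L₂ ε₁ ε₂ ε₄ : ℝ)
    (hL₁ : 0 < L₁) (hL₂ : 0 < L₂) (hε₁ : 0 < ε₁) (hε₂ : 0 < ε₂)
    (f : EuclideanSpace ℝ (Fin d) → ℝ)
    (hf : Differentiable ℝ f) (hf' : Differentiable ℝ (gradient f))
    (hglip : ∀ x y, ‖gradient f x - gradient f y‖ ≤ L₁ * ‖x - y‖)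
    (hHlip : ∀ x y, ‖fderiv ℝ (gradient f) x - fderiv ℝ (gradient f) y‖ ≤ L₂ * ‖x - y‖)
    (x g v : EuclideanSpace ℝ (Fin d)) (hv : ‖v‖ = 1)
    (hg : ‖g - gradient f x‖ ≤ ε₄)
    (hε₄ : ε₄ ≤ min (ε₁ / (2 * Real.sqrt 2)) (ε₂ ^ 2 / (24 * L₂)))
    (H : EuclideanSpace ℝ (Fin d) →L[ℝ] EuclideanSpace ℝ (Fin d))
    (hHsym : IsSelfAdjoint H) (hH : ‖H - fderiv ℝ (gradient f) x‖ ≤ ε₂ / 24)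
    (xplus : EuclideanSpace ℝ (Fin d))
    (hxplus : xplus =
      if -(ε₂ ^ 2 / (2 * L₂ ^ 2)) * ⟪H v, v⟫ - 11 * ε₂ ^ 3 / (48 * L₂ ^ 2)
          > ‖g‖ ^ 2 / (4 * L₁) - ε₁ ^ 2 / (8 * L₁)
      then x - (ε₂ / L₂ * sgn ⟪v, g⟫) • v
      else x - L₁⁻¹ • g) :
    f x - f xplus ≥
      max ((1 / (4 * L₁)) * ‖g‖ ^ 2 - ε₁ ^ 2 / (8 * L₁))
        (-(ε₂ ^ 2 / (2 * L₂ ^ 2)) * ⟪H v, v⟫ - 11 * ε₂ ^ 3 / (48 * L₂ ^ 2)) := by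
  have hε₄0 : 0 ≤ ε₄ := le_trans (norm_nonneg _) hg
  have hε₄b : ε₄ ≤ ε₂ ^ 2 / (24 * L₂) := hε₄.trans (min_le_right _ _)
  have hε₄a : ε₄ ≤ ε₁ / (2 * Real.sqrt 2) := hε₄.trans (min_le_left _ _)
  set e := gradient f x - g with he
  have hge : ‖e‖ ≤ ε₄ := by rw [he, norm_sub_rev]; exact hg
  have hgrad : gradient f x = g + e := by rw [he]; abel
  have hAeq : (1 / (4 * L₁)) * ‖g‖ ^ 2 - ε₁ ^ 2 / (8 * L₁)
      = ‖g‖ ^ 2 / (4 * L₁) - ε₁ ^ 2 / (8 * L₁) := by ring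
  rw [hAeq, hxplus]
  set A := fderiv ℝ (gradient f) x with hA
  split_ifs with hcond
  · -- curvature step
    rw [max_eq_right hcond.le]
    set η := ε₂ / L₂ with hη
    have hη0 : 0 < η := div_pos hε₂ hL₂
    set s := sgn ⟪v, g⟫ with hs
    have hsabs : |s| = 1 := sgn_abs _
    have hs2 : s ^ 2 = 1 := by
      have := sq_abs s; rw [hsabs] at this; simpa using this.symm
    set δ : EuclideanSpace ℝ (Fin d) := (-(η * s)) • v with hδ
    have hxd : x - (η * s) • v = x + δ := by rw [hδ, neg_smul, sub_eq_add_neg]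
    rw [hxd]
    have hδn : ‖δ‖ = η := by
      rw [hδ, norm_smul, hv, mul_one, Real.norm_eq_abs, abs_neg, abs_mul, hsabs,
        abs_of_pos hη0, mul_one]
    have htay := taylor2 hf hf' hHlip x δ
    rw [hδn] at htay
    have h1 : f (x + δ) - f x - ⟪gradient f x, δ⟫ - ⟪A δ, δ⟫ / 2 ≤ L₂ / 6 * η ^ 3 :=
      (le_abs_self _).trans htay
    -- first order term
    have hT1 : ⟪gradient f x, δ⟫ ≤ η * ε₄ := by
      have hip : ⟪gradient f x, δ⟫ = (-(η * s)) * (⟪g, v⟫ + ⟪e, v⟫) := by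
        rw [hgrad, hδ, real_inner_smul_right, inner_add_left]
      have habs : s * ⟪g, v⟫ = |⟪g, v⟫| := by
        rw [hs, real_inner_comm g v, sgn_mul_self]
      have hev : |⟪e, v⟫| ≤ ε₄ := by
        calc |⟪e, v⟫| ≤ ‖e‖ * ‖v‖ := abs_real_inner_le_norm _ _
          _ ≤ ε₄ := by rw [hv, mul_one]; exact hge
      have h2 : -(⟪e, v⟫) ≤ ε₄ := by
        have := neg_abs_le ⟪e, v⟫; linarith
      have h3 : ⟪e, v⟫ ≤ ε₄ := (le_abs_self _).trans hev
      rw [hip]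
      have hcase : s = 1 ∨ s = -1 := by
        rw [hs]; unfold sgn; split_ifs <;> simp
      rcases hcase with h | h
      · rw [h] at habs ⊢
        have hP : 0 ≤ ⟪g, v⟫ := by
          have := abs_nonneg ⟪g, v⟫; linarith [habs]
        have hm1 : η * ⟪e, v⟫ ≤ η * ε₄ := mul_le_mul_of_nonneg_left h3 hη0.le
        have hm2 : 0 ≤ η * ⟪g, v⟫ := mul_nonneg hη0.le hP
        have hexp : -(η * 1) * (⟪g, v⟫ + ⟪e, v⟫) = -(η * ⟪g, v⟫) - η * ⟪e, v⟫ := by ring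
        rw [hexp]
        have hm3 : -(η * ⟪e, v⟫) ≤ η * ε₄ := by
          have := mul_le_mul_of_nonneg_left h2 hη0.le
          linarith [this]
        linarith
      · rw [h] at habs ⊢
        have hP : ⟪g, v⟫ ≤ 0 := by
          have h0 : 0 ≤ |⟪g, v⟫| := abs_nonneg _
          linarith [habs]
        have hm1 : η * ⟪e, v⟫ ≤ η * ε₄ := mul_le_mul_of_nonneg_left h3 hη0.le
        have hm2 : η * ⟪g, v⟫ ≤ 0 := mul_nonpos_of_nonneg_of_nonpos hη0.le hP
        have hexp : -(η * (-1)) * (⟪g, v⟫ + ⟪e, v⟫) = η * ⟪g, v⟫ + η * ⟪e, v⟫ := by ring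
        rw [hexp]
        linarith
    -- second order term
    have hT2 : ⟪A δ, δ⟫ = η ^ 2 * ⟪A v, v⟫ := by
      rw [hδ, A.map_smul, real_inner_smul_left, real_inner_smul_right]
      have : -(η * s) * (-(η * s) * ⟪A v, v⟫) = s ^ 2 * (η ^ 2 * ⟪A v, v⟫) := by ring
      rw [this, hs2, one_mul]
    have hAv : ⟪A v, v⟫ ≤ ⟪H v, v⟫ + ε₂ / 24 := by
      have hdiff : ⟪A v, v⟫ - ⟪H v, v⟫ = -⟪(H - A) v, v⟫ := by
        rw [ContinuousLinearMap.sub_apply, inner_sub_left]; ring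
      have hb : |⟪(H - A) v, v⟫| ≤ ε₂ / 24 := by
        calc |⟪(H - A) v, v⟫| ≤ ‖(H - A) v‖ * ‖v‖ := abs_real_inner_le_norm _ _
          _ ≤ ‖H - A‖ * ‖v‖ * ‖v‖ := by
            apply mul_le_mul_of_nonneg_right ((H - A).le_opNorm v) (norm_nonneg _)
          _ ≤ ε₂ / 24 := by rw [hv, mul_one, mul_one]; exact hH
      have := neg_abs_le ⟪(H - A) v, v⟫
      linarith
    -- assemble
    have hη2 : ε₂ = L₂ * η := by rw [hη]; field_simp
    have hε₄c : ε₄ ≤ L₂ * η ^ 2 / 24 := by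
      have : ε₂ ^ 2 / (24 * L₂) = L₂ * η ^ 2 / 24 := by
        rw [hη]; field_simp
      linarith [hε₄b]
    have hgoal1 : -(ε₂ ^ 2 / (2 * L₂ ^ 2)) * ⟪H v, v⟫ - 11 * ε₂ ^ 3 / (48 * L₂ ^ 2)
        = -(η ^ 2 / 2) * ⟪H v, v⟫ - 11 * L₂ * η ^ 3 / 48 := by
      rw [hη]; field_simp
    rw [hgoal1]
    have hmul : η ^ 2 / 2 * ⟪A v, v⟫ ≤ η ^ 2 / 2 * (⟪H v, v⟫ + ε₂ / 24) := by
      apply mul_le_mul_of_nonneg_left hAv (by positivity)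
    have hmul2 : η ^ 2 / 2 * (⟪H v, v⟫ + ε₂ / 24)
        = η ^ 2 / 2 * ⟪H v, v⟫ + L₂ * η ^ 3 / 48 := by rw [hη2]; ring
    have hmul3 : η * ε₄ ≤ η * (L₂ * η ^ 2 / 24) := mul_le_mul_of_nonneg_left hε₄c hη0.le
    have hmul4 : η * (L₂ * η ^ 2 / 24) = L₂ * η ^ 3 / 24 := by ring
    rw [hT2] at h1
    linarith
  · -- gradient step
    rw [max_eq_left (not_lt.1 hcond)]
    set δ : EuclideanSpace ℝ (Fin d) := (-(L₁⁻¹)) • g with hδ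
    have hxd : x - L₁⁻¹ • g = x + δ := by rw [hδ, neg_smul, sub_eq_add_neg]
    rw [hxd]
    have hflip : ∀ a b, ‖fderiv ℝ f a - fderiv ℝ f b‖ ≤ L₁ * ‖a - b‖ := by
      intro a b; rw [fderiv_sub_norm]; exact hglip a b
    have htay := taylor1 hf hflip x δ
    rw [grad_inner, Real.norm_eq_abs] at htay
    have h1 : f (x + δ) - f x - ⟪gradient f x, δ⟫ ≤ L₁ / 2 * ‖δ‖ ^ 2 :=
      (le_abs_self _).trans htay
    have hδn : ‖δ‖ = L₁⁻¹ * ‖g‖ := by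
      rw [hδ, norm_smul, Real.norm_eq_abs, abs_neg, abs_of_pos (inv_pos.2 hL₁)]
    have hip : ⟪gradient f x, δ⟫ = -(L₁⁻¹) * (‖g‖ ^ 2 + ⟪e, g⟫) := by
      rw [hgrad, hδ, real_inner_smul_right, inner_add_left, real_inner_self_eq_norm_sq]
    have heg : -(ε₄ * ‖g‖) ≤ ⟪e, g⟫ := by
      have h2 : |⟪e, g⟫| ≤ ε₄ * ‖g‖ := by
        calc |⟪e, g⟫| ≤ ‖e‖ * ‖g‖ := abs_real_inner_le_norm _ _
          _ ≤ ε₄ * ‖g‖ := mul_le_mul_of_nonneg_right hge (norm_nonneg _)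
      linarith [neg_abs_le ⟪e, g⟫]
    have hε₄sq : 8 * ε₄ ^ 2 ≤ ε₁ ^ 2 := by
      have hsq2 : (0:ℝ) < Real.sqrt 2 := Real.sqrt_pos.2 (by norm_num)
      have h2 : ε₄ * (2 * Real.sqrt 2) ≤ ε₁ := by
        rw [← le_div_iff₀ (by positivity)]; exact hε₄a
      have h3 := mul_self_le_mul_self (by positivity) h2
      have hss : Real.sqrt 2 * Real.sqrt 2 = 2 := Real.mul_self_sqrt (by norm_num)
      have heq : ε₄ * (2 * Real.sqrt 2) * (ε₄ * (2 * Real.sqrt 2))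
          = 4 * (Real.sqrt 2 * Real.sqrt 2) * ε₄ ^ 2 := by ring
      rw [heq, hss] at h3
      have : ε₁ * ε₁ = ε₁ ^ 2 := by ring
      linarith
    have hstep : f x - f (x + δ) ≥ ‖g‖ ^ 2 / (2 * L₁) - ε₄ * ‖g‖ / L₁ := by
      have hn2 : L₁ / 2 * ‖δ‖ ^ 2 = ‖g‖ ^ 2 / (2 * L₁) := by
        rw [hδn]; field_simp
      have hc0 : (0:ℝ) ≤ L₁⁻¹ := (inv_pos.2 hL₁).le
      have h3 : L₁⁻¹ * (-(ε₄ * ‖g‖)) ≤ L₁⁻¹ * ⟪e, g⟫ :=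
        mul_le_mul_of_nonneg_left heg hc0
      have h4 : L₁⁻¹ * (ε₄ * ‖g‖) = ε₄ * ‖g‖ / L₁ := by field_simp
      have h5 : L₁⁻¹ * ‖g‖ ^ 2 = ‖g‖ ^ 2 / L₁ := by field_simp
      rw [hn2, hip] at h1
      have h6 : ‖g‖ ^ 2 / L₁ - ‖g‖ ^ 2 / (2 * L₁) = ‖g‖ ^ 2 / (2 * L₁) := by
        field_simp; ring
      linarith
    have key : (1 / 4) * ‖g‖ ^ 2 - ε₁ ^ 2 / 8 ≤ ‖g‖ ^ 2 / 2 - ε₄ * ‖g‖ := by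
      nlinarith [sq_nonneg (‖g‖ - 2 * ε₄)]
    have hc0 : (0:ℝ) ≤ L₁⁻¹ := (inv_pos.2 hL₁).le
    have key2 := mul_le_mul_of_nonneg_left key hc0
    have e1 : L₁⁻¹ * ((1 / 4) * ‖g‖ ^ 2 - ε₁ ^ 2 / 8) = ‖g‖ ^ 2 / (4 * L₁) - ε₁ ^ 2 / (8 * L₁) := by
      field_simp
    have e2 : L₁⁻¹ * (‖g‖ ^ 2 / 2 - ε₄ * ‖g‖) = ‖g‖ ^ 2 / (2 * L₁) - ε₄ * ‖g‖ / L₁ := by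
      field_simp
    rw [e1, e2] at key2
    linarith
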